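/- Let S be a finite non-abelian simple group, let G be a finite group, and suppose N = S × ⋯ × S (a direct product of k copies of S) is a minimal normal subgroup of G. If χ is an irreducible complex character of S that is extendible to Aut(S), then the product character χ × ⋯ × χ of N is extendible to G/C_G(N); in particular, G has an irreducible complex character of degree χ(1)^k. -/

import Mathlib

open CategoryTheory

/-- `n` is the degree of an irreducible complex character of `G`. -/
def IsIrrDegree (G : Type) [Group G] (n : ℕ) : Prop :=
  ∃ V : FDRep ℂ G, Simple V ∧ Module.finrank ℂ V = n

/-- `b(G)`: the largest degree of an irreducible character of `G`. -/
noncomputable def bDeg (G : Type) [Group G] : ℕ :=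
  sSup {n | IsIrrDegree G n}

/-- `c(G)`: the smallest degree of a nonlinear irreducible character of `G`
(with the convention `c(G) = 1` when `G` is abelian). -/
noncomputable def cDeg (G : Type) [Group G] : ℕ :=
  max 1 (sInf {n | IsIrrDegree G n ∧ 1 < n})

/-- The character degree ratio `rat(G) = b(G)/c(G)`. -/
noncomputable def charRatio (G : Type) [Group G] : ℝ :=
  (bDeg G : ℝ) / (cDeg G : ℝ)

/-- `σ` is a composition series of `G`:  it starts at the trivial subgroup, ends at `G`,
and each term is normal in the next with simple quotient. -/
def IsCompSeries {G : Type*} [Group G] {n : ℕ} (σ : Fin (n + 1) → Subgroup G) : Prop :=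
  σ 0 = ⊥ ∧ σ (Fin.last n) = ⊤ ∧
    ∀ i : Fin n, σ i.castSucc ≤ σ i.succ ∧
      ∃ _ : ((σ i.castSucc).subgroupOf (σ i.succ)).Normal,
        IsSimpleGroup (↥(σ i.succ) ⧸ (σ i.castSucc).subgroupOf (σ i.succ))

/-- The composition factor at position `i` of the series `σ` is non-abelian. -/
def NonabelianFactor {G : Type*} [Group G] {n : ℕ} (σ : Fin (n + 1) → Subgroup G)
    (i : Fin n) : Prop :=
  ¬ ∀ a b : G, a ∈ σ i.succ → b ∈ σ i.succ → a * b * a⁻¹ * b⁻¹ ∈ σ i.castSucc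

/-- The number of non-abelian composition factors of the series `σ`. -/
noncomputable def nonabCount {G : Type*} [Group G] {n : ℕ}
    (σ : Fin (n + 1) → Subgroup G) : ℕ :=
  Nat.card {i : Fin n // NonabelianFactor σ i}

/-- `N` is a minimal normal subgroup of `G`. -/
def IsMinimalNormal {G : Type*} [Group G] (N : Subgroup G) : Prop :=
  N.Normal ∧ N ≠ ⊥ ∧ ∀ M : Subgroup G, M.Normal → M ≤ N → M ≠ ⊥ → M = N

/-- An irreducible character (given by a representation `V`) of `S` is extendible to `Aut(S)`:
there is an irreducible character of `Aut(S)` restricting, along the embedding of `S` into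
`Aut(S)` by conjugation, to the character of `V`. -/
def ExtendsToAut (S : Type) [Group S] (V : FDRep ℂ S) : Prop :=
  ∃ W : FDRep ℂ (MulAut S), Simple W ∧
    ∀ s : S, W.character (MulAut.conj s) = V.character s

namespace Aux
variable {Γ : Type} [Group Γ]

/-- A G-invariant submodule gives a subrepresentation. -/
noncomputable def subRep (U : FDRep ℂ Γ) (p : Submodule ℂ U)
    (hp : ∀ g x, x ∈ p → U.ρ g x ∈ p) : Representation ℂ Γ p where
  toFun g := (U.ρ g).restrict (fun x hx => hp g x hx)
  map_one' := by ext x; simp [LinearMap.restrict_apply]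
  map_mul' a b := by ext x; simp [LinearMap.restrict_apply]

theorem simple_of_irred (U : FDRep ℂ Γ) (hnt : Nontrivial U)
    (h : ∀ p : Submodule ℂ U, (∀ g x, x ∈ p → U.ρ g x ∈ p) → p = ⊥ ∨ p = ⊤) :
    Simple U := by
  constructor
  intro Y f hf
  constructor
  · intro hiso hzero
    obtain ⟨u, hu⟩ := exists_ne (0 : U)
    have h1 : inv f ≫ f = 𝟙 U := IsIso.inv_hom_id f
    simp only [hzero, Limits.comp_zero] at h1
    have := congrArg Action.Hom.hom h1
    apply hu
    calc u = (𝟙 U : U ⟶ U).hom u := rfl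
    _ = (0 : U ⟶ U).hom u := by rw [← this]
    _ = 0 := rfl
  · intro hfne
    -- f.hom is injective
    have hcomm : ∀ g v, f.hom (Y.ρ g v) = U.ρ g (f.hom v) := by
      intro g v
      exact congrArg (fun (φ : Y.V ⟶ U.V) => φ v) (f.comm g)
    have hker : ∀ g x, x ∈ LinearMap.ker f.hom.hom.hom → Y.ρ g x ∈ LinearMap.ker f.hom.hom.hom := by
      intro g x hx
      exact LinearMap.mem_ker.mpr (by erw [hcomm g x]; rw [show f.hom x = 0 from LinearMap.mem_ker.mp hx, map_zero])
    -- the inclusion of the kernel subrepresentation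
    haveI : FiniteDimensional ℂ (LinearMap.ker f.hom.hom.hom) := inferInstance
    let K : FDRep ℂ Γ := FDRep.of (subRep Y (LinearMap.ker f.hom.hom.hom) hker)
    let ι : K ⟶ Y := ⟨FGModuleCat.ofHom (LinearMap.ker f.hom.hom.hom).subtype, fun g => rfl⟩
    have hι : ι ≫ f = (0 : K ⟶ Y) ≫ f := by
      apply Action.hom_ext
      simp only [Action.comp_hom, Action.zero_hom, Limits.zero_comp]
      apply FGModuleCat.hom_ext
      apply LinearMap.ext
      rintro ⟨x, hx⟩
      exact hx
    have hι0 : ι = 0 := (cancel_mono f).mp hι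
    have hinj : Function.Injective f.hom.hom.hom := by
      rw [← LinearMap.ker_eq_bot]
      ext x
      simp only [Submodule.mem_bot]
      constructor
      · intro hx
        have := congrArg (fun (φ : K ⟶ Y) => φ.hom (⟨x, hx⟩ : LinearMap.ker f.hom.hom.hom)) hι0
        exact this
      · rintro rfl; exact (LinearMap.ker f.hom.hom.hom).zero_mem
    -- the range is invariant
    have hrange : ∀ g x, x ∈ LinearMap.range f.hom.hom.hom → U.ρ g x ∈ LinearMap.range f.hom.hom.hom := by
      rintro g x ⟨y, rfl⟩
      exact ⟨Y.ρ g y, hcomm g y⟩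
    rcases h (LinearMap.range f.hom.hom.hom) hrange with hbot | htop
    · exfalso
      apply hfne
      apply Action.hom_ext
      ext y
      have : f.hom y ∈ LinearMap.range f.hom.hom.hom := ⟨y, rfl⟩
      rw [hbot] at this
      exact (Submodule.mem_bot ℂ).mp this
    · have hbij : Function.Bijective f.hom.hom.hom :=
        ⟨hinj, by rw [← LinearMap.range_eq_top]; exact htop⟩
      let eL := LinearEquiv.ofBijective f.hom.hom.hom hbij
      let ginv : U ⟶ Y := ⟨FGModuleCat.ofHom eL.symm.toLinearMap, by
        intro g
        ext u
        apply hinj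
        show f.hom (eL.symm ((U.ρ g) u)) = f.hom ((Y.ρ g) (eL.symm u))
        rw [hcomm]
        have h1 : f.hom (eL.symm ((U.ρ g) u)) = (U.ρ g) u := eL.apply_symm_apply _
        have h2 : f.hom (eL.symm u) = u := eL.apply_symm_apply _
        rw [h1, h2]⟩
      refine ⟨⟨ginv, ?_, ?_⟩⟩
      · apply Action.hom_ext
        ext y
        show eL.symm (f.hom y) = y
        exact eL.symm_apply_apply y
      · apply Action.hom_ext
        ext u
        show f.hom (eL.symm u) = u
        exact eL.apply_symm_apply u

end Aux

theorem averageMap_apply' {k G V : Type*} [CommRing k] [Group G] [AddCommGroup V]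
    [Module k V] (ρ : Representation k G V) [Fintype G] [Invertible (Fintype.card G : k)]
    (v : V) :
    Representation.averageMap ρ v = ⅟(Fintype.card G : k) • ∑ g : G, ρ g v := by
  simp [Representation.averageMap, GroupAlgebra.average, map_smul, map_sum,
    LinearMap.smul_apply, LinearMap.sum_apply]

theorem irred_of_norm {Γ : Type} [Group Γ] [Fintype Γ] (U : FDRep ℂ Γ) (hnt : Nontrivial U)
    (h : ∑ g : Γ, U.character g * U.character g⁻¹ = (Fintype.card Γ : ℂ)) :
    ∀ p : Submodule ℂ U, (∀ g x, x ∈ p → U.ρ g x ∈ p) → p = ⊥ ∨ p = ⊤ := by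
  haveI : Invertible (Fintype.card Γ : ℂ) :=
    invertibleOfNonzero (Nat.cast_ne_zero.mpr Fintype.card_ne_zero)
  set L := Representation.linHom U.ρ U.ρ with hL
  -- the space of invariants of `linHom` is one-dimensional
  have hdim : Module.finrank ℂ L.invariants = 1 := by
    have key := FDRep.average_char_eq_finrank_invariants (FDRep.of L)
    have hchar : ∀ g : Γ, (FDRep.of L).character g = U.character g⁻¹ * U.character g :=
      fun g => FDRep.char_linHom U U g
    rw [Finset.sum_congr rfl (fun g _ => hchar g)] at key
    have hsum : ∑ g : Γ, U.character g⁻¹ * U.character g = (Fintype.card Γ : ℂ) := by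
      rw [← h]
      exact Finset.sum_congr rfl fun g _ => mul_comm _ _
    rw [hsum, Nat.card_eq_fintype_card, inv_mul_cancel₀ (Nat.cast_ne_zero.mpr Fintype.card_ne_zero)] at key
    have h2 : Module.finrank ℂ (Representation.invariants (FDRep.of L).ρ) = 1 := by
      exact_mod_cast key.symm
    exact h2
  intro p hp
  by_cases hbot : p = ⊥
  · exact Or.inl hbot
  right
  -- a projection onto p
  obtain ⟨q, hq⟩ := Submodule.exists_isCompl p
  set proj : U →ₗ[ℂ] U := p.subtype ∘ₗ Submodule.projectionOnto p q hq with hproj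
  have hproj_mem : ∀ x : U, proj x ∈ p := fun x => (Submodule.projectionOnto p q hq x).2
  have hproj_id : ∀ x : U, x ∈ p → proj x = x := by
    intro x hx
    show (Submodule.projectionOnto p q hq x : U) = x
    rw [Submodule.projectionOnto_apply_left hq ⟨x, hx⟩]
  set π := Representation.averageMap L proj with hπ
  have hπ_mem : π ∈ L.invariants := Representation.averageMap_invariant (ρ := L) proj
  have hid_mem : LinearMap.id ∈ L.invariants := by
    rw [Representation.mem_invariants]
    intro g
    rw [Representation.linHom_apply]
    ext x
    simp [← Module.End.mul_apply, ← map_mul]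
  have hid_ne : (⟨LinearMap.id, hid_mem⟩ : L.invariants) ≠ 0 := by
    intro hcon
    obtain ⟨u, hu⟩ := exists_ne (0 : U)
    apply hu
    have := congrArg (fun f : L.invariants => (f : U →ₗ[ℂ] U) u) hcon
    simpa using this
  -- π is a multiple of the identity
  obtain ⟨c, hc⟩ := (finrank_eq_one_iff_of_nonzero' (⟨LinearMap.id, hid_mem⟩ : L.invariants)
    hid_ne).mp hdim ⟨π, hπ_mem⟩
  have hπ_eq : π = c • LinearMap.id := by
    have := congrArg (fun f : L.invariants => (f : U →ₗ[ℂ] U)) hc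
    simpa using this.symm
  -- π maps into p
  have hπ_into : ∀ x : U, π x ∈ p := by
    intro x
    rw [hπ, averageMap_apply']
    simp only [LinearMap.smul_apply, LinearMap.sum_apply]
    refine Submodule.smul_mem _ _ (Submodule.sum_mem _ fun g _ => ?_)
    rw [Representation.linHom_apply]
    exact hp g _ (hproj_mem _)
  -- π is the identity on p
  have hπ_fix : ∀ x : U, x ∈ p → π x = x := by
    intro x hx
    rw [hπ, averageMap_apply']
    simp only [LinearMap.smul_apply, LinearMap.sum_apply]
    have : ∀ g : Γ, (L g proj) x = x := by
      intro g
      rw [Representation.linHom_apply]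
      simp only [LinearMap.comp_apply]
      rw [hproj_id _ (hp g⁻¹ x hx), ← Module.End.mul_apply, ← map_mul, mul_inv_cancel, map_one,
        Module.End.one_apply]
    rw [Finset.sum_congr rfl (fun g _ => this g)]
    simp [Finset.card_univ, ← Nat.cast_smul_eq_nsmul ℂ, smul_smul]
  -- hence c = 1 and π = id, so p = ⊤
  obtain ⟨x₀, hx₀p, hx₀⟩ : ∃ x₀, x₀ ∈ p ∧ x₀ ≠ 0 := by
    by_contra hcon
    push_neg at hcon
    exact hbot (by ext x; simp only [Submodule.mem_bot]; exact ⟨fun hx => hcon x hx, by rintro rfl; exact p.zero_mem⟩)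
  have hc1 : c = 1 := by
    have h1 : π x₀ = c • x₀ := by rw [hπ_eq]; simp
    have h2 : π x₀ = x₀ := hπ_fix x₀ hx₀p
    have : c • x₀ = x₀ := by rw [← h1, h2]
    by_contra hcne
    apply hx₀
    have h3 : (c - 1) • x₀ = 0 := by
      rw [sub_smul, one_smul]
      exact sub_eq_zero.mpr this
    have hcs : c - 1 ≠ 0 := sub_ne_zero.mpr hcne
    simpa [smul_eq_zero, hcs] using h3
  rw [eq_top_iff]
  intro x _
  have : π x = x := by rw [hπ_eq, hc1]; simp
  rw [← this]
  exact hπ_into x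

namespace Aux
variable {S : Type} [Group S] {k : ℕ}

/-- The `i`-th coordinate factor of `S^k`. -/
def factor (S : Type) [Group S] (k : ℕ) (i : Fin k) : Subgroup (Fin k → S) where
  carrier := {f | ∀ j, j ≠ i → f j = 1}
  one_mem' := fun j _ => rfl
  mul_mem' := fun {a b} ha hb j hj => by simp [ha j hj, hb j hj]
  inv_mem' := fun {a} ha j hj => by simp [ha j hj]

theorem mem_factor {i : Fin k} {f : Fin k → S} :
    f ∈ factor S k i ↔ ∀ j, j ≠ i → f j = 1 := Iff.rfl

theorem mulSingle_mem_factor (i : Fin k) (s : S) : Pi.mulSingle i s ∈ factor S k i :=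
  fun j hj => Pi.mulSingle_eq_of_ne (M := fun _ => S) hj s

theorem eq_mulSingle_of_mem_factor {i : Fin k} {f : Fin k → S} (h : f ∈ factor S k i) :
    f = Pi.mulSingle i (f i) := by
  funext j
  by_cases hj : j = i
  · subst hj; simp
  · rw [h j hj, Pi.mulSingle_eq_of_ne hj]

instance factor_normal (i : Fin k) : (factor S k i).Normal := by
  constructor
  intro f hf g j hj
  simp only [Pi.mul_apply, Pi.inv_apply]
  rw [hf j hj]
  simp

theorem factor_le_factor_iff [Nontrivial S] {i j : Fin k} (h : factor S k i ≤ factor S k j) :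
    i = j := by
  by_contra hij
  obtain ⟨s, hs⟩ := exists_ne (1 : S)
  have := h (mulSingle_mem_factor i s) i hij
  rw [Pi.mulSingle_eq_same] at this
  exact hs this

theorem center_eq_bot [IsSimpleGroup S] (hS : ¬ ∀ a b : S, a * b = b * a) :
    Subgroup.center S = ⊥ := by
  rcases (inferInstance : (Subgroup.center S).Normal).eq_bot_or_eq_top with h | h
  · exact h
  · exact absurd (fun a b => by
      have : b ∈ Subgroup.center S := h ▸ Subgroup.mem_top b
      exact Subgroup.mem_center_iff.mp this a) hS

theorem exists_noncomm [IsSimpleGroup S] (hS : ¬ ∀ a b : S, a * b = b * a)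
    {x : S} (hx : x ≠ 1) : ∃ s : S, s * x ≠ x * s := by
  by_contra hcon
  push_neg at hcon
  apply hx
  have : x ∈ Subgroup.center S := Subgroup.mem_center_iff.mpr (fun g => hcon g)
  rwa [center_eq_bot hS, Subgroup.mem_bot] at this

/-- Every nontrivial normal subgroup of `S^k` contains a factor. -/
theorem factor_le_of_normal [IsSimpleGroup S] (hS : ¬ ∀ a b : S, a * b = b * a)
    (M : Subgroup (Fin k → S)) (hM : M.Normal) (hMbot : M ≠ ⊥) :
    ∃ i, factor S k i ≤ M := by
  obtain ⟨x, hxM, hx1⟩ := (Subgroup.bot_or_exists_ne_one M).resolve_left hMbot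
  obtain ⟨i, hi⟩ : ∃ i, x i ≠ 1 := by
    by_contra hcon
    push_neg at hcon
    exact hx1 (funext hcon)
  obtain ⟨s, hs⟩ := exists_noncomm hS hi
  set y : Fin k → S := Pi.mulSingle i s * x * (Pi.mulSingle i s)⁻¹ * x⁻¹ with hy
  have hyM : y ∈ M := by
    refine Subgroup.mul_mem _ (hM.conj_mem x hxM (Pi.mulSingle i s)) (Subgroup.inv_mem _ hxM)
  have hysingle : y = Pi.mulSingle i (s * x i * s⁻¹ * (x i)⁻¹) := by
    funext j
    by_cases hj : j = i
    · subst hj; simp [hy]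
    · simp [hy, Pi.mulSingle_eq_of_ne hj]
  have hyi : s * x i * s⁻¹ * (x i)⁻¹ ≠ 1 := by
    intro hcon
    apply hs
    have h1 : s * x i * s⁻¹ = x i := by rwa [mul_inv_eq_one] at hcon
    calc s * x i = (s * x i * s⁻¹) * s := by group
    _ = x i * s := by rw [h1]
  -- the subgroup of s' with mulSingle i s' ∈ M is all of S
  set K : Subgroup S := M.comap (MonoidHom.mulSingle (fun _ : Fin k => S) i) with hK
  haveI : K.Normal := hM.comap _
  have hKtop : K = ⊤ := by
    rcases ‹K.Normal›.eq_bot_or_eq_top with hb | ht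
    · exfalso
      have : (s * x i * s⁻¹ * (x i)⁻¹) ∈ K := by
        show Pi.mulSingle i _ ∈ M
        rw [← hysingle]
        exact hyM
      rw [hb, Subgroup.mem_bot] at this
      exact hyi this
    · exact ht
  refine ⟨i, fun f hf => ?_⟩
  rw [eq_mulSingle_of_mem_factor hf]
  have : f i ∈ K := hKtop ▸ Subgroup.mem_top _
  exact this

end Aux

namespace Aux2
open Aux
variable {S : Type} [Group S] [IsSimpleGroup S] {k : ℕ}

theorem factor_minimal (hS : ¬ ∀ a b : S, a * b = b * a) (i : Fin k)
    (M : Subgroup (Fin k → S)) (hM : M.Normal) (hle : M ≤ factor S k i) (hMbot : M ≠ ⊥) :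
    M = factor S k i := by
  obtain ⟨j, hj⟩ := factor_le_of_normal hS M hM hMbot
  have hji : j = i := factor_le_factor_iff (hj.trans hle)
  subst hji
  exact le_antisymm hle hj

/-- An automorphism of `S^k` maps each factor onto some factor. -/
theorem map_factor (hS : ¬ ∀ a b : S, a * b = b * a) (φ : MulAut (Fin k → S)) (i : Fin k) :
    ∃ j, (factor S k i).map φ.toMonoidHom = factor S k j := by
  have hφinj : Function.Injective φ.toMonoidHom := φ.injective
  have hφsurj : Function.Surjective φ.toMonoidHom := φ.surjective
  have hmapnormal : ((factor S k i).map φ.toMonoidHom).Normal :=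
    (factor_normal i).map _ hφsurj
  have hmapbot : (factor S k i).map φ.toMonoidHom ≠ ⊥ := by
    intro hcon
    obtain ⟨s, hs⟩ := exists_ne (1 : S)
    have hmem : φ.toMonoidHom (Pi.mulSingle i s) ∈ (factor S k i).map φ.toMonoidHom :=
      ⟨_, mulSingle_mem_factor i s, rfl⟩
    rw [hcon, Subgroup.mem_bot] at hmem
    have h2 : Pi.mulSingle i s = (1 : Fin k → S) := φ.injective (by simpa using hmem)
    exact hs (by simpa using congrFun h2 i)
  obtain ⟨j, hj⟩ := factor_le_of_normal hS _ hmapnormal hmapbot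
  refine ⟨j, ?_⟩
  -- φ(factor i) is also minimal, since φ⁻¹ of any nontrivial normal subgroup inside it is factor i
  have hsub : ((factor S k j).comap φ.toMonoidHom) = factor S k i := by
    apply factor_minimal hS
    · exact (factor_normal j).comap _
    · intro f hf
      -- f with φ f ∈ factor j ≤ map φ (factor i): so φ f = φ f' for f' ∈ factor i
      have : φ.toMonoidHom f ∈ (factor S k i).map φ.toMonoidHom := hj hf
      obtain ⟨f', hf', hff⟩ := this
      rwa [← hφinj hff]
    · intro hcon
      obtain ⟨s, hs⟩ := exists_ne (1 : S)
      -- φ⁻¹ of mulSingle j s lies in the comap? no: factor j ≤ map φ (factor i), so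
      have h1 : Pi.mulSingle j s ∈ (factor S k i).map φ.toMonoidHom := hj (mulSingle_mem_factor j s)
      obtain ⟨f', hf', hff⟩ := h1
      have hf'mem : f' ∈ (factor S k j).comap φ.toMonoidHom := by
        show φ.toMonoidHom f' ∈ factor S k j
        rw [hff]
        exact mulSingle_mem_factor j s
      rw [hcon, Subgroup.mem_bot] at hf'mem
      rw [hf'mem, map_one] at hff
      exact hs (by simpa using congrFun hff.symm j)
  calc (factor S k i).map φ.toMonoidHom
      = (((factor S k j).comap φ.toMonoidHom)).map φ.toMonoidHom := by rw [hsub]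
  _ = factor S k j := by
      rw [Subgroup.map_comap_eq_self_of_surjective hφsurj]

theorem exists_perm_data (hS : ¬ ∀ a b : S, a * b = b * a) (φ : MulAut (Fin k → S)) (i : Fin k) :
    ∃ (j : Fin k) (γ : S →* S), ∀ s, φ (Pi.mulSingle i s) = Pi.mulSingle j (γ s) := by
  obtain ⟨j, hj⟩ := map_factor hS φ i
  refine ⟨j, (Pi.evalMonoidHom (fun _ : Fin k => S) j).comp
    (φ.toMonoidHom.comp (MonoidHom.mulSingle (fun _ : Fin k => S) i)), fun s => ?_⟩
  have hmem : φ (Pi.mulSingle i s) ∈ factor S k j := by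
    rw [← hj]
    exact ⟨Pi.mulSingle i s, mulSingle_mem_factor i s, rfl⟩
  exact eq_mulSingle_of_mem_factor hmem

theorem data_unique (φ : MulAut (Fin k → S)) {i j j' : Fin k} {γ γ' : S →* S}
    (h : ∀ s, φ (Pi.mulSingle i s) = Pi.mulSingle j (γ s))
    (h' : ∀ s, φ (Pi.mulSingle i s) = Pi.mulSingle j' (γ' s)) :
    j = j' ∧ γ = γ' := by
  obtain ⟨s₀, hs₀⟩ := exists_ne (1 : S)
  have hγs₀ : γ s₀ ≠ 1 := by
    intro hcon
    have h1 : φ (Pi.mulSingle i s₀) = 1 := by rw [h s₀, hcon]; simp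
    have h2 : Pi.mulSingle i s₀ = 1 := φ.injective (by simpa using h1)
    exact hs₀ (by simpa using congrFun h2 i)
  have hjj : j = j' := by
    by_contra hne
    have h2 := congrFun ((h s₀).symm.trans (h' s₀)) j
    rw [Pi.mulSingle_eq_same] at h2
    rw [Pi.mulSingle_eq_of_ne hne] at h2
    exact hγs₀ h2
  subst hjj
  refine ⟨rfl, ?_⟩
  ext s
  have h2 := congrFun ((h s).symm.trans (h' s)) j
  rwa [Pi.mulSingle_eq_same, Pi.mulSingle_eq_same] at h2

end Aux2

namespace Aux3
open Aux Aux2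

/-- Bundled wreath-product data for an automorphism group of `S^k`. -/
structure WreathData (S : Type) [Group S] (k : ℕ) where
  p : MulAut (Fin k → S) → Fin k → Fin k
  c : MulAut (Fin k → S) → Fin k → MulAut S
  spec : ∀ φ i s, φ (Pi.mulSingle i s) = Pi.mulSingle (p φ i) (c φ i s)

variable {S : Type} [Group S] [IsSimpleGroup S] {k : ℕ}

theorem wreathData_exists (hS : ¬ ∀ a b : S, a * b = b * a) :
    Nonempty (WreathData S k) := by
  classical
  choose p0 c0 hpc using fun (φ : MulAut (Fin k → S)) (i : Fin k) => exists_perm_data hS φ i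
  -- composition laws for the raw data
  have hmul : ∀ φ φ' i, p0 (φ * φ') i = p0 φ (p0 φ' i) ∧
      c0 (φ * φ') i = (c0 φ (p0 φ' i)).comp (c0 φ' i) := by
    intro φ φ' i
    refine data_unique (φ * φ') (hpc (φ * φ') i) (fun s => ?_)
    show φ (φ' (Pi.mulSingle i s)) = _
    rw [hpc φ' i s, hpc φ (p0 φ' i) (c0 φ' i s)]
    rfl
  have hone : ∀ i, p0 1 i = i ∧ c0 1 i = MonoidHom.id S := by
    intro i
    exact data_unique 1 (hpc 1 i) (fun s => rfl)
  have hppinv : ∀ (φ : MulAut (Fin k → S)) i, p0 φ⁻¹ (p0 φ i) = i := by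
    intro φ i
    have := (hmul φ⁻¹ φ i).1
    rw [inv_mul_cancel, (hone i).1] at this
    exact this.symm
  have hcinv1 : ∀ (φ : MulAut (Fin k → S)) i,
      (c0 φ⁻¹ (p0 φ i)).comp (c0 φ i) = MonoidHom.id S := by
    intro φ i
    have := (hmul φ⁻¹ φ i).2
    rw [inv_mul_cancel, (hone i).2] at this
    exact this.symm
  have hcinv2 : ∀ (φ : MulAut (Fin k → S)) i,
      (c0 φ i).comp (c0 φ⁻¹ (p0 φ i)) = MonoidHom.id S := by
    intro φ i
    have := (hmul φ φ⁻¹ (p0 φ i)).2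
    rw [mul_inv_cancel, (hone (p0 φ i)).2, hppinv φ i] at this
    exact this.symm
  refine ⟨⟨p0, fun φ i => MonoidHom.toMulEquiv (c0 φ i) (c0 φ⁻¹ (p0 φ i))
    (hcinv1 φ i) (hcinv2 φ i), fun φ i s => hpc φ i s⟩⟩

variable (W : WreathData S k)

theorem WreathData.unique (W : WreathData S k) [Nontrivial S] {φ : MulAut (Fin k → S)}
    {i j : Fin k} {γ : S →* S}
    (h : ∀ s, φ (Pi.mulSingle i s) = Pi.mulSingle j (γ s)) :
    W.p φ i = j ∧ ∀ s, W.c φ i s = γ s := by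
  have := data_unique φ (γ := ((W.c φ i : S ≃* S) : S →* S)) (fun s => W.spec φ i s) h
  exact ⟨this.1, fun s => by rw [← this.2]; rfl⟩

theorem WreathData.p_one (W : WreathData S k) [Nontrivial S] (i : Fin k) : W.p 1 i = i :=
  (W.unique (φ := 1) (i := i) (j := i) (γ := MonoidHom.id S) (fun s => rfl)).1

theorem WreathData.c_one (W : WreathData S k) [Nontrivial S] (i : Fin k) : W.c 1 i = 1 := by
  have := (W.unique (φ := 1) (i := i) (j := i) (γ := MonoidHom.id S) (fun s => rfl)).2
  ext s
  exact this s

theorem WreathData.p_mul (W : WreathData S k) [Nontrivial S] (φ φ' : MulAut (Fin k → S))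
    (i : Fin k) : W.p (φ * φ') i = W.p φ (W.p φ' i) :=
  (W.unique (φ := φ * φ') (i := i) (j := W.p φ (W.p φ' i)) (γ := ((W.c φ (W.p φ' i) : S ≃* S) : S →* S).comp ((W.c φ' i : S ≃* S) : S →* S))
    (fun s => by
      show φ (φ' (Pi.mulSingle i s)) = _
      rw [W.spec φ' i s, W.spec φ (W.p φ' i) (W.c φ' i s)]
      rfl)).1

theorem WreathData.c_mul (W : WreathData S k) [Nontrivial S] (φ φ' : MulAut (Fin k → S))
    (i : Fin k) : W.c (φ * φ') i = W.c φ (W.p φ' i) * W.c φ' i := by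
  have := (W.unique (φ := φ * φ') (i := i) (j := W.p φ (W.p φ' i)) (γ := ((W.c φ (W.p φ' i) : S ≃* S) : S →* S).comp ((W.c φ' i : S ≃* S) : S →* S))
    (fun s => by
      show φ (φ' (Pi.mulSingle i s)) = _
      rw [W.spec φ' i s, W.spec φ (W.p φ' i) (W.c φ' i s)]
      rfl)).2
  ext s
  exact this s

theorem WreathData.p_bijective (W : WreathData S k) [Nontrivial S] (φ : MulAut (Fin k → S)) :
    Function.Bijective (W.p φ) := by
  have h1 : ∀ i, W.p φ⁻¹ (W.p φ i) = i := by
    intro i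
    rw [← W.p_mul, inv_mul_cancel, W.p_one]
  have h2 : ∀ i, W.p φ (W.p φ⁻¹ i) = i := by
    intro i
    rw [← W.p_mul, mul_inv_cancel, W.p_one]
  exact Function.bijective_iff_has_inverse.mpr ⟨W.p φ⁻¹, h1, h2⟩

/-- The data of an inner automorphism. -/
theorem WreathData.conj_data (W : WreathData S k) [Nontrivial S] (f : Fin k → S) (i : Fin k) :
    W.p (MulAut.conj f) i = i ∧ ∀ s, W.c (MulAut.conj f) i s = f i * s * (f i)⁻¹ := by
  have h : ∀ s, (MulAut.conj f) (Pi.mulSingle i s) =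
      Pi.mulSingle i ((MulAut.conj (f i) : S →* S) s) := by
    intro s
    show f * Pi.mulSingle i s * f⁻¹ = _
    funext j
    by_cases hj : j = i
    · subst hj; simp
    · simp [Pi.mulSingle_eq_of_ne hj]
  exact ⟨(W.unique h).1, fun s => (W.unique h).2 s⟩

end Aux3

namespace Aux4
open Aux Aux2 Aux3

variable {S : Type} [Group S] [IsSimpleGroup S] {k d : ℕ}
variable (m : MulAut S →* Matrix (Fin d) (Fin d) ℂ) (W : WreathData S k)

/-- The Kronecker-power matrix of an automorphism of `S^k`. -/
noncomputable def bigMat (φ : MulAut (Fin k → S)) :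
    Matrix (Fin k → Fin d) (Fin k → Fin d) ℂ :=
  Matrix.of fun J J' => ∏ i, m (W.c φ i) (J (W.p φ i)) (J' i)

theorem bigMat_apply (φ : MulAut (Fin k → S)) (J J' : Fin k → Fin d) :
    bigMat m W φ J J' = ∏ i, m (W.c φ i) (J (W.p φ i)) (J' i) := rfl

theorem bigMat_one : bigMat m W 1 = 1 := by
  classical
  ext J J'
  rw [bigMat_apply]
  simp only [W.p_one, W.c_one, map_one]
  by_cases h : J = J'
  · subst h
    simp [Matrix.one_apply]
  · obtain ⟨i, hi⟩ : ∃ i, J i ≠ J' i := by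
      by_contra hcon
      push_neg at hcon
      exact h (funext hcon)
    rw [Matrix.one_apply_ne (Ne.symm (fun hc => h hc.symm))]
    exact Finset.prod_eq_zero (Finset.mem_univ i) (Matrix.one_apply_ne hi)

theorem bigMat_mul (φ φ' : MulAut (Fin k → S)) :
    bigMat m W (φ * φ') = bigMat m W φ * bigMat m W φ' := by
  classical
  ext J J''
  let σ' : Equiv.Perm (Fin k) := Equiv.ofBijective _ (W.p_bijective φ')
  have hσ' : ∀ i, σ' i = W.p φ' i := fun i => rfl
  have hσ'inv : ∀ l, W.p φ' (σ'.symm l) = l := fun l => σ'.apply_symm_apply l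
  rw [Matrix.mul_apply]
  -- rewrite the right-hand side
  have hrhs : ∀ J' : Fin k → Fin d,
      bigMat m W φ J J' * bigMat m W φ' J' J'' =
      ∏ l, (m (W.c φ l) (J (W.p φ l)) (J' l) *
        m (W.c φ' (σ'.symm l)) (J' l) (J'' (σ'.symm l))) := by
    intro J'
    have key : ∏ i, m (W.c φ' i) (J' (W.p φ' i)) (J'' i)
        = ∏ l, m (W.c φ' (σ'.symm l)) (J' l) (J'' (σ'.symm l)) := by
      rw [← Equiv.prod_comp σ'.symm (fun i => m (W.c φ' i) (J' (W.p φ' i)) (J'' i))]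
      exact Finset.prod_congr rfl fun l _ => by rw [hσ'inv l]
    rw [bigMat_apply, bigMat_apply, key, ← Finset.prod_mul_distrib]
  rw [Finset.sum_congr rfl (fun J' _ => hrhs J')]
  rw [← Fintype.piFinset_univ,
    ← Finset.prod_univ_sum (fun _ : Fin k => (Finset.univ : Finset (Fin d)))
      (fun l t => m (W.c φ l) (J (W.p φ l)) t * m (W.c φ' (σ'.symm l)) t (J'' (σ'.symm l)))]
  rw [bigMat_apply]
  have hlhs : ∏ i, m (W.c (φ * φ') i) (J (W.p (φ * φ') i)) (J'' i)
      = ∏ l, m (W.c (φ * φ') (σ'.symm l)) (J (W.p (φ * φ') (σ'.symm l))) (J'' (σ'.symm l)) :=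
    (Equiv.prod_comp σ'.symm _).symm
  rw [hlhs]
  refine Finset.prod_congr rfl fun l _ => ?_
  rw [W.c_mul, W.p_mul, hσ'inv l, map_mul, Matrix.mul_apply]

/-- The trace of the big matrix for a factor-preserving automorphism. -/
theorem bigMat_trace (φ : MulAut (Fin k → S)) (hφ : ∀ i, W.p φ i = i) :
    Matrix.trace (bigMat m W φ) = ∏ i, Matrix.trace (m (W.c φ i)) := by
  classical
  unfold Matrix.trace
  simp only [Matrix.diag, bigMat_apply, hφ]
  rw [← Fintype.piFinset_univ,
    ← Finset.prod_univ_sum (fun _ : Fin k => (Finset.univ : Finset (Fin d)))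
      (fun i t => m (W.c φ i) t t)]

end Aux4



/-- If `N ≅ S × ⋯ × S` (`k` copies of a non-abelian finite simple group `S`)
is a minimal normal subgroup of a finite group `G` and `χ ∈ Irr(S)` is extendible to `Aut(S)`,
then the product character `χ × ⋯ × χ` of `N` is extendible to `G/C_G(N)`; in particular `G`
has an irreducible character of degree `χ(1)^k`. -/
theorem product_character_extends_to_quotient_centralizer
    (S : Type) [Group S] [Finite S] [IsSimpleGroup S]
    (hS : ¬ ∀ a b : S, a * b = b * a)
    (G : Type) [Group G] [Finite G] (k : ℕ) (N : Subgroup G)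
    (hN : IsMinimalNormal N) (e : N ≃* (Fin k → S))
    (χ : FDRep ℂ S) (hχ : Simple χ) (hext : ExtendsToAut S χ) :
    (∃ _ : (Subgroup.centralizer (N : Set G)).Normal,
      ∃ W : FDRep ℂ (G ⧸ Subgroup.centralizer (N : Set G)), Simple W ∧
        ∀ x : N, W.character (QuotientGroup.mk (x : G)) = ∏ i, χ.character (e x i)) ∧
      ∃ U : FDRep ℂ G, Simple U ∧ Module.finrank ℂ U = Module.finrank ℂ χ ^ k := by
  classical
  obtain ⟨hNnormal, -, -⟩ := hN
  haveI := hNnormal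
  haveI : Fintype S := Fintype.ofFinite S
  haveI := hχ
  obtain ⟨ψ, hψsimple, hψchar⟩ := hext
  haveI := hψsimple
  -- dimension
  set d := Module.finrank ℂ ψ with hd
  have hdχ : Module.finrank ℂ χ = d := by
    have h1 := hψchar 1
    rw [map_one, FDRep.char_one, FDRep.char_one] at h1
    exact_mod_cast h1.symm
  -- matrix form of the representation ψ of Aut S
  let b := Module.finBasis ℂ ψ
  let m : MulAut S →* Matrix (Fin d) (Fin d) ℂ :=
  { toFun := fun g => LinearMap.toMatrix b b (ψ.ρ g)
    map_one' := by
      show LinearMap.toMatrix b b (ψ.ρ 1) = 1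
      rw [map_one]; exact LinearMap.toMatrix_one b
    map_mul' := fun g h => by
      show LinearMap.toMatrix b b (ψ.ρ (g * h)) = _
      rw [map_mul]; exact LinearMap.toMatrix_mul b _ _ }
  have hm_trace : ∀ g : MulAut S, Matrix.trace (m g) = ψ.character g := fun g =>
    (LinearMap.trace_eq_matrix_trace ℂ b (ψ.ρ g)).symm
  -- the dimension is positive
  have hψnt : Nontrivial ψ := by
    by_contra hcon
    rw [not_nontrivial_iff_subsingleton] at hcon
    apply CategoryTheory.id_nonzero ψ
    apply Action.hom_ext
    apply FGModuleCat.hom_ext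
    apply LinearMap.ext
    intro x
    exact hcon.elim _ _
  have hdpos : 0 < d := by
    rw [hd]
    exact Module.finrank_pos
  haveI hne : Nonempty (Fin k → Fin d) := ⟨fun _ => ⟨0, hdpos⟩⟩
  -- wreath data
  obtain ⟨Wd⟩ := Aux3.wreathData_exists (S := S) (k := k) hS
  -- the big representation of MulAut (S^k)
  let P := (Fin k → Fin d) → ℂ
  let ρbig : MulAut (Fin k → S) →* (P →ₗ[ℂ] P) :=
  { toFun := fun φ => Matrix.toLin' (Aux4.bigMat m Wd φ)
    map_one' := by
      show Matrix.toLin' (Aux4.bigMat m Wd 1) = 1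
      rw [Aux4.bigMat_one, Matrix.toLin'_one]; rfl
    map_mul' := fun φ φ' => by
      show Matrix.toLin' (Aux4.bigMat m Wd (φ * φ')) = _
      rw [Aux4.bigMat_mul, Matrix.toLin'_mul]; rfl }
  -- the conjugation homomorphism G → MulAut (S^k)
  let αhom : G →* MulAut (Fin k → S) := (MulAut.congr e).toMonoidHom.comp MulAut.conjNormal
  have hα_inner : ∀ x : N, αhom (x : G) = MulAut.conj (e x) := by
    intro x
    refine MulEquiv.ext fun t => ?_
    show e ((MulAut.conjNormal (x : G)) (e.symm t)) = e x * t * (e x)⁻¹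
    have h1 : (MulAut.conjNormal (x : G)) (e.symm t) = x * (e.symm t) * x⁻¹ := by
      apply Subtype.ext
      rw [MulAut.conjNormal_apply]
      push_cast
      rfl
    rw [h1, map_mul, map_mul, map_inv, MulEquiv.apply_symm_apply]
  -- character computation
  have hchar : ∀ f : Fin k → S,
      LinearMap.trace ℂ P (ρbig (MulAut.conj f)) = ∏ i, χ.character (f i) := by
    intro f
    have htr : LinearMap.trace ℂ P (Matrix.toLin' (Aux4.bigMat m Wd (MulAut.conj f)))
        = Matrix.trace (Aux4.bigMat m Wd (MulAut.conj f)) := by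
      rw [LinearMap.trace_eq_matrix_trace ℂ (Pi.basisFun ℂ (Fin k → Fin d)),
        LinearMap.toMatrix_eq_toMatrix', LinearMap.toMatrix'_toLin']
    rw [show ρbig (MulAut.conj f) = Matrix.toLin' (Aux4.bigMat m Wd (MulAut.conj f)) from rfl,
      htr, Aux4.bigMat_trace m Wd _ (fun i => (Wd.conj_data f i).1)]
    refine Finset.prod_congr rfl fun i _ => ?_
    have hc : Wd.c (MulAut.conj f) i = MulAut.conj (f i) := by
      ext s
      rw [(Wd.conj_data f i).2 s]
      rfl
    rw [hc, hm_trace, hψchar]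
  -- the restricted representation of S^k
  let τ : Representation ℂ (Fin k → S) P := ρbig.comp (MulAut.conj)
  let Urest : FDRep ℂ (Fin k → S) := FDRep.of τ
  have hUchar : ∀ f, Urest.character f = ∏ i, χ.character (f i) := fun f => hchar f
  -- norm-one computation for χ
  haveI : Invertible ((Fintype.card S : ℂ)) :=
    invertibleOfNonzero (Nat.cast_ne_zero.mpr Fintype.card_ne_zero)
  have hχnorm : ∑ s : S, χ.character s * χ.character s⁻¹ = (Fintype.card S : ℂ) := by
    letI : Invertible ((Nat.card S : ℂ)) :=
      invertibleOfNonzero (Nat.cast_ne_zero.mpr Nat.card_pos.ne')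
    have horth := FDRep.char_orthonormal (k := ℂ) (G := S) χ χ
    rw [if_pos ⟨Iso.refl _⟩] at horth
    have horth' : ⅟(Fintype.card S : ℂ) • ∑ s : S, χ.character s * χ.character s⁻¹ = (1 : ℂ) := by
      rw [Nat.card_eq_fintype_card] at horth
      simpa [invOf_eq_inv] using horth
    have h2 := congrArg (fun z : ℂ => (Fintype.card S : ℂ) * z) horth'
    simp only [smul_eq_mul, mul_one] at h2
    rwa [← mul_assoc, mul_invOf_self, one_mul] at h2
  -- norm-one for the product character
  have hnorm : ∑ f : Fin k → S, Urest.character f * Urest.character f⁻¹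
      = (Fintype.card (Fin k → S) : ℂ) := by
    have hptwise : ∀ f : Fin k → S, Urest.character f * Urest.character f⁻¹
        = ∏ i, (χ.character (f i) * χ.character (f i)⁻¹) := by
      intro f
      rw [hUchar f, hUchar f⁻¹, ← Finset.prod_mul_distrib]
      rfl
    rw [Finset.sum_congr rfl (fun f _ => hptwise f)]
    rw [← Fintype.piFinset_univ, ← Finset.prod_univ_sum (fun _ : Fin k => (Finset.univ : Finset S))
      (fun _ s => χ.character s * χ.character s⁻¹)]
    rw [Finset.prod_congr rfl (fun i _ => hχnorm), Finset.prod_const, Finset.card_univ,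
      Fintype.card_fin]
    rw [Fintype.card_fun, Fintype.card_fin]
    norm_cast
  have hUrest_nt : Nontrivial Urest := (show Nontrivial P from inferInstance)
  have hτdich := irred_of_norm Urest hUrest_nt hnorm
  -- the representation of the quotient
  have hα1 : ∀ c ∈ Subgroup.centralizer (N : Set G), αhom c = 1 := by
    intro c hc
    have hconj : MulAut.conjNormal (G := G) c = (1 : MulAut N) := by
      refine MulEquiv.ext fun n => ?_
      apply Subtype.ext
      rw [MulAut.conjNormal_apply]
      show c * (n : G) * c⁻¹ = (n : G)
      have hcomm := Subgroup.mem_centralizer_iff.mp hc (n : G) n.2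
      rw [← hcomm]
      group
    show (MulAut.congr e) (MulAut.conjNormal c) = 1
    rw [hconj, map_one]
  have hCnormal : (Subgroup.centralizer (N : Set G)).Normal := by
    constructor
    intro c hc g
    rw [Subgroup.mem_centralizer_iff] at hc ⊢
    intro n hn
    have hn' : g⁻¹ * n * g ∈ N := by
      have := hNnormal.conj_mem n hn g⁻¹
      simpa using this
    have hcn := hc _ hn'
    calc n * (g * c * g⁻¹) = g * ((g⁻¹ * n * g) * c) * g⁻¹ := by group
    _ = g * (c * (g⁻¹ * n * g)) * g⁻¹ := by rw [hcn]
    _ = (g * c * g⁻¹) * n := by group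
  haveI := hCnormal
  let αbar : (G ⧸ Subgroup.centralizer (N : Set G)) →* MulAut (Fin k → S) :=
    QuotientGroup.lift _ αhom hα1
  let ρW : Representation ℂ (G ⧸ Subgroup.centralizer (N : Set G)) P := ρbig.comp αbar
  let Wbig : FDRep ℂ (G ⧸ Subgroup.centralizer (N : Set G)) := FDRep.of ρW
  have hWρ : ∀ g : G, Wbig.ρ (QuotientGroup.mk g) = ρbig (αhom g) := fun g => rfl
  -- simplicity of Wbig
  have hWsimple : Simple Wbig := by
    apply Aux.simple_of_irred
    · exact (show Nontrivial P from inferInstance)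
    · intro p hp
      apply hτdich p
      intro f x hx
      have hτf : τ f = Wbig.ρ (QuotientGroup.mk ((e.symm f : N) : G)) := by
        rw [hWρ]
        show ρbig (MulAut.conj f) = ρbig (αhom ((e.symm f : N) : G))
        rw [hα_inner (e.symm f), MulEquiv.apply_symm_apply]
      show τ f x ∈ p
      rw [hτf]
      exact hp _ x hx
  -- the character identity
  have hWchar : ∀ x : N, Wbig.character (QuotientGroup.mk (x : G)) = ∏ i, χ.character (e x i) := by
    intro x
    show LinearMap.trace ℂ P (Wbig.ρ (QuotientGroup.mk (x : G))) = _
    rw [hWρ, hα_inner x]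
    exact hchar (e x)
  -- the representation of G itself
  let ρU : Representation ℂ G P := ρbig.comp αhom
  let Ufull : FDRep ℂ G := FDRep.of ρU
  have hUsimple : Simple Ufull := by
    apply Aux.simple_of_irred
    · exact (show Nontrivial P from inferInstance)
    · intro p hp
      apply hτdich p
      intro f x hx
      have hτf : τ f = Ufull.ρ ((e.symm f : N) : G) := by
        show ρbig (MulAut.conj f) = ρbig (αhom ((e.symm f : N) : G))
        rw [hα_inner (e.symm f), MulEquiv.apply_symm_apply]
      show τ f x ∈ p
      rw [hτf]
      exact hp _ x hx
  have hUrank : Module.finrank ℂ Ufull = Module.finrank ℂ χ ^ k := by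
    show Module.finrank ℂ P = _
    rw [hdχ]
    rw [Module.finrank_pi ℂ]
    rw [Fintype.card_fun, Fintype.card_fin, Fintype.card_fin]
  exact ⟨⟨hCnormal, Wbig, hWsimple, hWchar⟩, Ufull, hUsimple, hUrank⟩
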